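/- arXiv:1210.7520 — 3 statements merged into one kernel-verified Lean document; each statement's English description precedes it below -/
import Mathlib

section
/- Let γ₁(t) = (t,0) and let γ₂(s) = p + s·v be a straight line in ℝ² with |v| = 1, which is distinct from the x₁-axis and intersects it at the point γ₂(s₀) = (a,0) with a ≠ 0 (i.e., γ₁(t₀) = (a,0) with t₀ = a). Let φ(t,s) = |γ₁(t) − γ₂(s)|. Then ∂²φ/∂t∂s (t,s) ≠ 0 whenever t ≠ t₀ and s ≠ s₀. -/
/-- Intersecting-lines case of Lemma 3.2 in the Euclidean plane: `γ₁(t) = (t,0)` and a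
unit-speed line `γ₂(s) = p + s v` distinct from the `x₁`-axis meeting it at
`γ₂(s₀) = (a,0)`, `a ≠ 0`.  Then `∂²φ/∂t∂s ≠ 0` off the lines `t = a`, `s = s₀`. -/
theorem stmt_7 (p₁ p₂ v₁ v₂ a s₀ : ℝ)
    (hv : v₁ ^ 2 + v₂ ^ 2 = 1) (hv₂ : v₂ ≠ 0)
    (hs₀ : p₁ + s₀ * v₁ = a ∧ p₂ + s₀ * v₂ = 0) (ha : a ≠ 0) :
    ∀ t s : ℝ, t ≠ a → s ≠ s₀ →
      deriv (fun s' : ℝ =>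
        deriv (fun t' : ℝ =>
          Real.sqrt ((t' - (p₁ + s' * v₁)) ^ 2 + (p₂ + s' * v₂) ^ 2)) t) s ≠ 0 := by
  obtain ⟨h1, h2⟩ := hs₀
  intro t s ht hs
  have hyval : ∀ s' : ℝ, p₂ + s' * v₂ = (s' - s₀) * v₂ := by
    intro s'; nlinarith [h2]
  have hys : p₂ + s * v₂ ≠ 0 := by
    rw [hyval]; exact mul_ne_zero (sub_ne_zero.mpr hs) hv₂
  have hinner : ∀ s' : ℝ, p₂ + s' * v₂ ≠ 0 →
      deriv (fun t' : ℝ =>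
        Real.sqrt ((t' - (p₁ + s' * v₁)) ^ 2 + (p₂ + s' * v₂) ^ 2)) t
      = (t - (p₁ + s' * v₁)) / Real.sqrt ((t - (p₁ + s' * v₁)) ^ 2 + (p₂ + s' * v₂) ^ 2) := by
    intro s' hy
    have hg : HasDerivAt (fun t' : ℝ => (t' - (p₁ + s' * v₁)) ^ 2 + (p₂ + s' * v₂) ^ 2)
        (2 * (t - (p₁ + s' * v₁))) t := by
      have := ((hasDerivAt_id t).sub_const (p₁ + s' * v₁)).pow 2
      simpa [mul_comm] using this.add_const ((p₂ + s' * v₂) ^ 2)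
    have hne : (t - (p₁ + s' * v₁)) ^ 2 + (p₂ + s' * v₂) ^ 2 ≠ 0 := by positivity
    rw [(hg.sqrt hne).deriv]; rw [mul_comm (2:ℝ) (t - (p₁ + s' * v₁)), mul_comm (2:ℝ)]
    exact mul_div_mul_right _ _ two_ne_zero
  -- eventual equality near s
  have hev : (fun s' : ℝ => deriv (fun t' : ℝ =>
        Real.sqrt ((t' - (p₁ + s' * v₁)) ^ 2 + (p₂ + s' * v₂) ^ 2)) t)
      =ᶠ[nhds s] (fun s' : ℝ =>
        (t - (p₁ + s' * v₁)) / Real.sqrt ((t - (p₁ + s' * v₁)) ^ 2 + (p₂ + s' * v₂) ^ 2)) := by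
    have hcont : Continuous (fun s' : ℝ => p₂ + s' * v₂) := by continuity
    have hopen : IsOpen {s' : ℝ | p₂ + s' * v₂ ≠ 0} :=
      isOpen_compl_singleton.preimage hcont
    filter_upwards [hopen.mem_nhds hys] with s' hy using hinner s' hy
  -- outer derivative
  set q : ℝ := Real.sqrt ((t - (p₁ + s * v₁)) ^ 2 + (p₂ + s * v₂) ^ 2) with hqdef
  have hqpos : 0 < q := Real.sqrt_pos.mpr (by positivity)
  have hq2 : q ^ 2 = (t - (p₁ + s * v₁)) ^ 2 + (p₂ + s * v₂) ^ 2 :=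
    Real.sq_sqrt (by positivity)
  have hu : HasDerivAt (fun s' : ℝ => t - (p₁ + s' * v₁)) (-v₁) s := by
    have := (((hasDerivAt_id s).mul_const v₁).const_add p₁).const_sub t
    simpa using this
  have hgs : HasDerivAt (fun s' : ℝ => (t - (p₁ + s' * v₁)) ^ 2 + (p₂ + s' * v₂) ^ 2)
      (2 * (t - (p₁ + s * v₁)) * (-v₁) + 2 * (p₂ + s * v₂) * v₂) s := by
    have h2' : HasDerivAt (fun s' : ℝ => p₂ + s' * v₂) v₂ s := by
      simpa using ((hasDerivAt_id s).mul_const v₂).const_add p₂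
    have := (hu.fun_pow 2).fun_add (h2'.fun_pow 2)
    simpa [mul_comm, mul_assoc, mul_left_comm] using this
  have hden : HasDerivAt (fun s' : ℝ =>
      Real.sqrt ((t - (p₁ + s' * v₁)) ^ 2 + (p₂ + s' * v₂) ^ 2))
      ((2 * (t - (p₁ + s * v₁)) * (-v₁) + 2 * (p₂ + s * v₂) * v₂) / (2 * q)) s :=
    hgs.sqrt (by positivity)
  have hH : HasDerivAt (fun s' : ℝ =>
      (t - (p₁ + s' * v₁)) / Real.sqrt ((t - (p₁ + s' * v₁)) ^ 2 + (p₂ + s' * v₂) ^ 2))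
      ((-v₁ * q - (t - (p₁ + s * v₁)) *
        ((2 * (t - (p₁ + s * v₁)) * (-v₁) + 2 * (p₂ + s * v₂) * v₂) / (2 * q))) / q ^ 2) s :=
    hu.div hden hqpos.ne'
  have hfinal : HasDerivAt (fun s' : ℝ => deriv (fun t' : ℝ =>
        Real.sqrt ((t' - (p₁ + s' * v₁)) ^ 2 + (p₂ + s' * v₂) ^ 2)) t)
      ((-v₁ * q - (t - (p₁ + s * v₁)) *
        ((2 * (t - (p₁ + s * v₁)) * (-v₁) + 2 * (p₂ + s * v₂) * v₂) / (2 * q))) / q ^ 2) s :=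
    hH.congr_of_eventuallyEq hev
  rw [hfinal.deriv]
  -- show the value is nonzero
  have hxval : t - (p₁ + s * v₁) = (t - a) - (s - s₀) * v₁ := by nlinarith [h1]
  have hnum : -v₁ * q ^ 2 - (t - (p₁ + s * v₁)) *
      ((t - (p₁ + s * v₁)) * (-v₁) + (p₂ + s * v₂) * v₂)
      = -((s - s₀) * v₂ ^ 2 * (t - a)) := by
    rw [hq2, hxval, hyval]; ring
  intro hc
  apply mul_ne_zero (mul_ne_zero (sub_ne_zero.mpr hs) (pow_ne_zero 2 hv₂)) (sub_ne_zero.mpr ht)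
  have hq3 : q ≠ 0 := hqpos.ne'
  field_simp at hc
  nlinarith [hnum, hc, hqpos, sq_nonneg q]
end

section
/- Let γ₁(t) = (t,0) and γ₂(s) = (a, 0) + s·v be a line in ℝ² with |v| = 1, v not parallel to (1,0), intersecting the x₁-axis at γ₂(s₀) with s₀ determined by the second coordinate vanishing, and assume the intersection point is not the origin. Let φ(t,s) = |γ₁(t) − γ₂(s)| and Π(t,s) = (t, ∂φ/∂t(t,s)). Then for t with γ₁(t) not equal to the intersection point, the Jacobian determinant of Π vanishes exactly when s = s₀, and at such points ∂³φ/∂t∂s² ≠ 0 (so Π has a fold singularity along {s = s₀}). -/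
/-- Euclidean model of the fold statement in Lemma 3.2: for `γ₁(t) = (t,0)` and the line
`γ₂(s) = (a + s v₁, s v₂)` with `v₂ ≠ 0`, `a ≠ 0`, the Jacobian determinant
`φ''_{ts}` of `Π(t,s) = (t, φ'_t(t,s))` vanishes exactly at `s = 0`, where moreover
`φ'''_{tss} ≠ 0` (so `Π` has a fold along `{s = 0}`). -/
theorem stmt_8 (v₁ v₂ a : ℝ) (hv : v₁ ^ 2 + v₂ ^ 2 = 1) (hv₂ : v₂ ≠ 0) (ha : a ≠ 0) :
    ∀ t : ℝ, t ≠ a →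
      (∀ s : ℝ,
        deriv (fun s' : ℝ =>
          deriv (fun t' : ℝ =>
            Real.sqrt ((t' - (a + s' * v₁)) ^ 2 + (s' * v₂) ^ 2)) t) s = 0 ↔ s = 0) ∧
      deriv (fun s : ℝ =>
        deriv (fun s' : ℝ =>
          deriv (fun t' : ℝ =>
            Real.sqrt ((t' - (a + s' * v₁)) ^ 2 + (s' * v₂) ^ 2)) t) s) 0 ≠ 0 := by
  intro t ht
  have hta : t - a ≠ 0 := sub_ne_zero.mpr ht
  -- positivity of the radicand at (t, s) for every s
  have hQ : ∀ s : ℝ, 0 < (t - (a + s * v₁)) ^ 2 + (s * v₂) ^ 2 := by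
    intro s
    rcases eq_or_ne s 0 with h | h
    · have : (t - a) ^ 2 > 0 := pow_pos (abs_pos.mpr hta) 2 |>.trans_eq (by rw [sq_abs])
      simp [h]
      nlinarith
    · have h2 : (s * v₂) ^ 2 > 0 :=
        pow_pos (abs_pos.mpr (mul_ne_zero h hv₂)) 2 |>.trans_eq (by rw [sq_abs])
      nlinarith [sq_nonneg (t - (a + s * v₁))]
  -- first derivative in t
  have hd1 : ∀ s : ℝ, deriv (fun t' : ℝ =>
        Real.sqrt ((t' - (a + s * v₁)) ^ 2 + (s * v₂) ^ 2)) t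
      = (t - (a + s * v₁)) / Real.sqrt ((t - (a + s * v₁)) ^ 2 + (s * v₂) ^ 2) := by
    intro s
    have hq := hQ s
    have h1 : HasDerivAt (fun t' : ℝ => (t' - (a + s * v₁)) ^ 2 + (s * v₂) ^ 2)
        (2 * (t - (a + s * v₁))) t := by
      have hb : HasDerivAt (fun t' : ℝ => t' - (a + s * v₁)) 1 t :=
        (hasDerivAt_id t).sub_const _
      simpa using (hb.pow 2).add_const ((s * v₂) ^ 2)
    have h2 := (Real.hasDerivAt_sqrt (ne_of_gt hq)).comp t h1
    have h3 : (1 / (2 * Real.sqrt ((t - (a + s * v₁)) ^ 2 + (s * v₂) ^ 2)))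
          * (2 * (t - (a + s * v₁)))
        = (t - (a + s * v₁)) / Real.sqrt ((t - (a + s * v₁)) ^ 2 + (s * v₂) ^ 2) := by
      have hr : Real.sqrt ((t - (a + s * v₁)) ^ 2 + (s * v₂) ^ 2) ≠ 0 :=
        ne_of_gt (Real.sqrt_pos.mpr hq)
      field_simp
    rw [← h3]
    exact h2.deriv
  -- the map `s ↦ φ'_t(t,s)` in closed form
  have hfun : (fun s' : ℝ => deriv (fun t' : ℝ =>
        Real.sqrt ((t' - (a + s' * v₁)) ^ 2 + (s' * v₂) ^ 2)) t)
      = fun s' : ℝ =>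
        (t - (a + s' * v₁)) / Real.sqrt ((t - (a + s' * v₁)) ^ 2 + (s' * v₂) ^ 2) :=
    funext hd1
  -- derivative in s of the closed form
  have hd2 : ∀ s : ℝ, HasDerivAt (fun s' : ℝ =>
        (t - (a + s' * v₁)) / Real.sqrt ((t - (a + s' * v₁)) ^ 2 + (s' * v₂) ^ 2))
      (-s * v₂ ^ 2 * (t - a) /
        (((t - (a + s * v₁)) ^ 2 + (s * v₂) ^ 2) *
          Real.sqrt ((t - (a + s * v₁)) ^ 2 + (s * v₂) ^ 2))) s := by
    intro s
    have hq := hQ s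
    set r := Real.sqrt ((t - (a + s * v₁)) ^ 2 + (s * v₂) ^ 2) with hrdef
    have hr : r ≠ 0 := ne_of_gt (Real.sqrt_pos.mpr hq)
    have hr2 : r ^ 2 = (t - (a + s * v₁)) ^ 2 + (s * v₂) ^ 2 := Real.sq_sqrt hq.le
    have hnum : HasDerivAt (fun s' : ℝ => t - (a + s' * v₁)) (-v₁) s := by
      have : HasDerivAt (fun s' : ℝ => a + s' * v₁) v₁ s := by
        simpa using ((hasDerivAt_id s).mul_const v₁).const_add a
      simpa using (this.const_sub t)
    have hQd : HasDerivAt (fun s' : ℝ => (t - (a + s' * v₁)) ^ 2 + (s' * v₂) ^ 2)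
        (2 * (t - (a + s * v₁)) * (-v₁) + 2 * (s * v₂) * v₂) s := by
      have h1 := hnum.fun_pow 2
      have h2 : HasDerivAt (fun s' : ℝ => (s' * v₂) ^ 2) (2 * (s * v₂) * v₂) s := by
        have : HasDerivAt (fun s' : ℝ => s' * v₂) v₂ s := by
          simpa using (hasDerivAt_id s).mul_const v₂
        simpa [mul_comm, mul_assoc, mul_left_comm] using this.fun_pow 2
      simpa [mul_comm, mul_assoc, mul_left_comm] using h1.fun_add h2
    have hs : HasDerivAt (fun s' : ℝ => Real.sqrt ((t - (a + s' * v₁)) ^ 2 + (s' * v₂) ^ 2))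
        ((2 * (t - (a + s * v₁)) * (-v₁) + 2 * (s * v₂) * v₂) / (2 * r)) s := by
      have := (Real.hasDerivAt_sqrt (ne_of_gt hq)).comp s hQd
      simpa [hrdef, div_eq_mul_inv, mul_comm, Function.comp_def] using this
    have hdiv := hnum.fun_div hs hr
    refine hdiv.congr_deriv (Eq.symm ?_)
    rw [← hrdef]
    field_simp
    rw [show (t - (a + s * v₁)) ^ 2 + s ^ 2 * v₂ ^ 2 = r ^ 2 by rw [hr2]; ring, mul_div_assoc,
      div_self (pow_ne_zero 2 hr)]
    linear_combination v₁ * hr2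
  -- closed form for the second mixed derivative
  have hderiv2 : ∀ s : ℝ, deriv (fun s' : ℝ =>
        deriv (fun t' : ℝ =>
          Real.sqrt ((t' - (a + s' * v₁)) ^ 2 + (s' * v₂) ^ 2)) t) s
      = -s * v₂ ^ 2 * (t - a) /
        (((t - (a + s * v₁)) ^ 2 + (s * v₂) ^ 2) *
          Real.sqrt ((t - (a + s * v₁)) ^ 2 + (s * v₂) ^ 2)) := by
    intro s
    rw [hfun]
    exact (hd2 s).deriv
  constructor
  · intro s
    rw [hderiv2 s]
    have hq := hQ s
    have hden : ((t - (a + s * v₁)) ^ 2 + (s * v₂) ^ 2) *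
        Real.sqrt ((t - (a + s * v₁)) ^ 2 + (s * v₂) ^ 2) ≠ 0 :=
      ne_of_gt (mul_pos hq (Real.sqrt_pos.mpr hq))
    rw [div_eq_zero_iff]
    constructor
    · rintro (h | h)
      · rcases mul_eq_zero.mp h with h | h
        · rcases mul_eq_zero.mp h with h | h
          · simpa using neg_eq_zero.mp h
          · exact absurd h (pow_ne_zero 2 hv₂)
        · exact absurd h hta
      · exact absurd h hden
    · intro h; left; simp [h]
  · -- third derivative at s = 0
    have hfun2 : (fun s : ℝ => deriv (fun s' : ℝ =>
          deriv (fun t' : ℝ =>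
            Real.sqrt ((t' - (a + s' * v₁)) ^ 2 + (s' * v₂) ^ 2)) t) s)
        = fun s : ℝ => -s * v₂ ^ 2 * (t - a) /
            (((t - (a + s * v₁)) ^ 2 + (s * v₂) ^ 2) *
              Real.sqrt ((t - (a + s * v₁)) ^ 2 + (s * v₂) ^ 2)) :=
      funext hderiv2
    rw [hfun2]
    have hq0 := hQ 0
    set r0 := Real.sqrt ((t - (a + 0 * v₁)) ^ 2 + (0 * v₂) ^ 2) with hr0def
    have hr0 : r0 ≠ 0 := ne_of_gt (Real.sqrt_pos.mpr hq0)
    -- numerator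
    have hnum : HasDerivAt (fun s : ℝ => -s * v₂ ^ 2 * (t - a)) (-(v₂ ^ 2 * (t - a))) 0 := by
      have : HasDerivAt (fun s : ℝ => s * (v₂ ^ 2 * (t - a))) (v₂ ^ 2 * (t - a)) 0 := by
        simpa using (hasDerivAt_id (0 : ℝ)).mul_const (v₂ ^ 2 * (t - a))
      have h2 := this.fun_neg
      have e : (fun s : ℝ => -s * v₂ ^ 2 * (t - a)) = fun s => -(s * (v₂ ^ 2 * (t - a))) := by
        funext s; ring
      rw [e]; exact h2
    -- denominator is differentiable at 0
    have hnum0 : HasDerivAt (fun s' : ℝ => t - (a + s' * v₁)) (-v₁) 0 := by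
      have : HasDerivAt (fun s' : ℝ => a + s' * v₁) v₁ 0 := by
        simpa using ((hasDerivAt_id (0:ℝ)).mul_const v₁).const_add a
      simpa using (this.const_sub t)
    have hQd : HasDerivAt (fun s' : ℝ => (t - (a + s' * v₁)) ^ 2 + (s' * v₂) ^ 2)
        (2 * (t - (a + 0 * v₁)) * (-v₁) + 2 * (0 * v₂) * v₂) 0 := by
      have h1 := hnum0.fun_pow 2
      have h2 : HasDerivAt (fun s' : ℝ => (s' * v₂) ^ 2) (2 * ((0:ℝ) * v₂) * v₂) 0 := by
        have : HasDerivAt (fun s' : ℝ => s' * v₂) v₂ 0 := by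
          simpa using (hasDerivAt_id (0:ℝ)).mul_const v₂
        simpa [mul_comm, mul_assoc, mul_left_comm] using this.fun_pow 2
      simpa [mul_comm, mul_assoc, mul_left_comm] using h1.fun_add h2
    have hs : HasDerivAt (fun s' : ℝ => Real.sqrt ((t - (a + s' * v₁)) ^ 2 + (s' * v₂) ^ 2))
        ((2 * (t - (a + 0 * v₁)) * (-v₁) + 2 * (0 * v₂) * v₂) / (2 * r0)) 0 := by
      have := (Real.hasDerivAt_sqrt (ne_of_gt hq0)).comp 0 hQd
      simpa [hr0def, div_eq_mul_inv, mul_comm, Function.comp_def] using this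
    have hden : HasDerivAt (fun s : ℝ =>
        ((t - (a + s * v₁)) ^ 2 + (s * v₂) ^ 2) *
          Real.sqrt ((t - (a + s * v₁)) ^ 2 + (s * v₂) ^ 2))
        ((2 * (t - (a + 0 * v₁)) * (-v₁) + 2 * (0 * v₂) * v₂) * r0 +
          ((t - (a + 0 * v₁)) ^ 2 + (0 * v₂) ^ 2) *
            ((2 * (t - (a + 0 * v₁)) * (-v₁) + 2 * (0 * v₂) * v₂) / (2 * r0))) 0 :=
      hQd.mul hs
    have hden0 : ((t - (a + (0:ℝ) * v₁)) ^ 2 + ((0:ℝ) * v₂) ^ 2) * r0 ≠ 0 :=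
      ne_of_gt (mul_pos hq0 (Real.sqrt_pos.mpr hq0))
    have hdiv := hnum.fun_div hden hden0
    have hval : deriv (fun s : ℝ => -s * v₂ ^ 2 * (t - a) /
        (((t - (a + s * v₁)) ^ 2 + (s * v₂) ^ 2) *
          Real.sqrt ((t - (a + s * v₁)) ^ 2 + (s * v₂) ^ 2))) 0
        = -(v₂ ^ 2 * (t - a)) / (((t - (a + (0:ℝ) * v₁)) ^ 2 + ((0:ℝ) * v₂) ^ 2) * r0) := by
      rw [hdiv.deriv]
      have h0 : -(0:ℝ) * v₂ ^ 2 * (t - a) = 0 := by ring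
      rw [h0]
      have hr0eq : r0 = Real.sqrt ((t - a) ^ 2) := by rw [hr0def]; norm_num
      rw [hr0eq]
      field_simp
      ring
    rw [hval]
    exact div_ne_zero (neg_ne_zero.mpr (mul_ne_zero (pow_ne_zero 2 hv₂) hta)) hden0
end

section
/- Let γ₁, γ₂ : ℝ → ℝ³ be two distinct straight lines parameterized by arclength (γᵢ(t) = pᵢ + t vᵢ, |vᵢ| = 1, the lines not equal as sets), and let φ(t,s) = |γ₁(t) − γ₂(s)|. Then there is at most one point (t₀,s₀) such that at every (t,s) with φ(t,s) ≠ 0 and (t,s) ≠ (t₀,s₀), at least one of ∂²φ/∂t∂s, ∂³φ/∂t²∂s, ∂³φ/∂t∂s² is nonzero. -/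
private def QQ (W a b c t s : ℝ) : ℝ := W + t^2 + s^2 + 2*t*a - 2*s*b - 2*t*s*c
private def AA (a c t s : ℝ) : ℝ := t + a - s*c
private def BB (b c t s : ℝ) : ℝ := t*c - s + b
private def NN (W a b c t s : ℝ) : ℝ := AA a c t s * BB b c t s - c * QQ W a b c t s
private noncomputable def FF (W a b c t s : ℝ) : ℝ := AA a c t s / Real.sqrt (QQ W a b c t s)
private noncomputable def GG (W a b c t s : ℝ) : ℝ :=
  NN W a b c t s / (Real.sqrt (QQ W a b c t s))^3

private lemma poly2 (α β γ x : ℝ) : HasDerivAt (fun y : ℝ => α + β*y + γ*y^2) (β + 2*γ*x) x := by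
  have h1 : HasDerivAt (fun y : ℝ => β*y) β x := by simpa using (hasDerivAt_id x).const_mul β
  have h2 : HasDerivAt (fun y : ℝ => γ*y^2) (γ*(2*x)) x := by
    simpa using (hasDerivAt_pow 2 x).const_mul γ
  have h := ((hasDerivAt_const x α).add h1).add h2
  refine h.congr_deriv ?_
  ring

private lemma hasDerivAt_QQ_t (W a b c s t : ℝ) :
    HasDerivAt (fun t' : ℝ => QQ W a b c t' s) (2 * AA a c t s) t := by
  have h := poly2 (W + s^2 - 2*s*b) (2*a - 2*s*c) 1 t
  have heq : (fun t' : ℝ => QQ W a b c t' s)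
      = (fun y : ℝ => (W + s^2 - 2*s*b) + (2*a - 2*s*c)*y + 1*y^2) := by
    funext y; simp only [QQ]; ring
  rw [heq]; refine h.congr_deriv ?_; simp only [AA]; ring

private lemma hasDerivAt_QQ_s (W a b c t s : ℝ) :
    HasDerivAt (fun s' : ℝ => QQ W a b c t s') (-2 * BB b c t s) s := by
  have h := poly2 (W + t^2 + 2*t*a) (-2*b - 2*t*c) 1 s
  have heq : (fun s' : ℝ => QQ W a b c t s')
      = (fun y : ℝ => (W + t^2 + 2*t*a) + (-2*b - 2*t*c)*y + 1*y^2) := by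
    funext y; simp only [QQ]; ring
  rw [heq]; refine h.congr_deriv ?_; simp only [BB]; ring

private lemma hasDerivAt_sqrtQQ_t (W a b c s t : ℝ) (h : 0 < QQ W a b c t s) :
    HasDerivAt (fun t' : ℝ => Real.sqrt (QQ W a b c t' s))
      (AA a c t s / Real.sqrt (QQ W a b c t s)) t := by
  have hr : Real.sqrt (QQ W a b c t s) ≠ 0 := ne_of_gt (Real.sqrt_pos.mpr h)
  have h1 := (Real.hasDerivAt_sqrt (ne_of_gt h)).comp t (hasDerivAt_QQ_t W a b c s t)
  refine h1.congr_deriv ?_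
  field_simp

private lemma hasDerivAt_sqrtQQ_s (W a b c t s : ℝ) (h : 0 < QQ W a b c t s) :
    HasDerivAt (fun s' : ℝ => Real.sqrt (QQ W a b c t s'))
      (-BB b c t s / Real.sqrt (QQ W a b c t s)) s := by
  have hr : Real.sqrt (QQ W a b c t s) ≠ 0 := ne_of_gt (Real.sqrt_pos.mpr h)
  have h1 := (Real.hasDerivAt_sqrt (ne_of_gt h)).comp s (hasDerivAt_QQ_s W a b c t s)
  refine h1.congr_deriv ?_
  field_simp

private lemma hasDerivAt_FF_s (W a b c t s : ℝ) (h : 0 < QQ W a b c t s) :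
    HasDerivAt (fun s' : ℝ => FF W a b c t s') (GG W a b c t s) s := by
  have hr : Real.sqrt (QQ W a b c t s) ≠ 0 := ne_of_gt (Real.sqrt_pos.mpr h)
  have hnum : HasDerivAt (fun s' : ℝ => AA a c t s') (-c) s := by
    have hp := poly2 (t + a) (-c) 0 s
    have heq : (fun s' : ℝ => AA a c t s') = (fun y : ℝ => (t + a) + (-c)*y + 0*y^2) := by
      funext y; simp only [AA]; ring
    rw [heq]; refine hp.congr_deriv ?_; ring
  have hdiv := hnum.div (hasDerivAt_sqrtQQ_s W a b c t s h) hr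
  have heq : (fun s' : ℝ => FF W a b c t s')
      = fun y => AA a c t y / Real.sqrt (QQ W a b c t y) := by
    funext y; simp only [FF]
  rw [heq]
  refine hdiv.congr_deriv ?_
  set r := Real.sqrt (QQ W a b c t s) with hrdef
  have hr2 : r^2 = QQ W a b c t s := Real.sq_sqrt h.le
  simp only [GG, NN]
  rw [← hr2]
  rw [Real.sqrt_sq (Real.sqrt_nonneg _ : (0:ℝ) ≤ r)]
  field_simp
  ring

private lemma hasDerivAt_NN_t (W a b c s t : ℝ) :
    HasDerivAt (fun t' : ℝ => NN W a b c t' s) (BB b c t s - c * AA a c t s) t := by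
  have h := poly2 ((a - s*c)*(b - s) - c*(W + s^2 - 2*s*b)) (b - s - c*a + c^2*s) 0 t
  have heq : (fun t' : ℝ => NN W a b c t' s)
      = (fun y : ℝ => ((a - s*c)*(b - s) - c*(W + s^2 - 2*s*b)) + (b - s - c*a + c^2*s)*y + 0*y^2) := by
    funext y; simp only [NN, AA, BB, QQ]; ring
  rw [heq]; refine h.congr_deriv ?_; simp only [AA, BB]; ring

private lemma hasDerivAt_NN_s (W a b c t s : ℝ) :
    HasDerivAt (fun s' : ℝ => NN W a b c t s') (c * BB b c t s - AA a c t s) s := by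
  have h := poly2 ((t + a)*(t*c + b) - c*(W + t^2 + 2*t*a)) (c^2*t + c*b - a - t) 0 s
  have heq : (fun s' : ℝ => NN W a b c t s')
      = (fun y : ℝ => ((t + a)*(t*c + b) - c*(W + t^2 + 2*t*a)) + (c^2*t + c*b - a - t)*y + 0*y^2) := by
    funext y; simp only [NN, AA, BB, QQ]; ring
  rw [heq]; refine h.congr_deriv ?_; simp only [AA, BB]; ring

private lemma hasDerivAt_GG_t (W a b c s t : ℝ) (h : 0 < QQ W a b c t s) :
    HasDerivAt (fun t' : ℝ => GG W a b c t' s)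
      (((BB b c t s - c * AA a c t s) * QQ W a b c t s - 3 * NN W a b c t s * AA a c t s)
        * Real.sqrt (QQ W a b c t s) / (QQ W a b c t s)^3) t := by
  have hr : Real.sqrt (QQ W a b c t s) ≠ 0 := ne_of_gt (Real.sqrt_pos.mpr h)
  have hden := (hasDerivAt_sqrtQQ_t W a b c s t h).pow 3
  have hdiv := (hasDerivAt_NN_t W a b c s t).div hden (pow_ne_zero 3 hr)
  have heq : (fun t' : ℝ => GG W a b c t' s)
      = fun y => NN W a b c y s / (Real.sqrt (QQ W a b c y s))^3 := by
    funext y; simp only [GG]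
  rw [heq]
  refine hdiv.congr_deriv ?_
  set r := Real.sqrt (QQ W a b c t s) with hrdef
  have hr2 : r^2 = QQ W a b c t s := Real.sq_sqrt h.le
  simp only [Pi.pow_apply]
  rw [← hr2]
  rw [Real.sqrt_sq (Real.sqrt_nonneg _ : (0:ℝ) ≤ r)]
  field_simp
  ring

private lemma hasDerivAt_GG_s (W a b c t s : ℝ) (h : 0 < QQ W a b c t s) :
    HasDerivAt (fun s' : ℝ => GG W a b c t s')
      (((c * BB b c t s - AA a c t s) * QQ W a b c t s + 3 * NN W a b c t s * BB b c t s)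
        * Real.sqrt (QQ W a b c t s) / (QQ W a b c t s)^3) s := by
  have hr : Real.sqrt (QQ W a b c t s) ≠ 0 := ne_of_gt (Real.sqrt_pos.mpr h)
  have hden := (hasDerivAt_sqrtQQ_s W a b c t s h).pow 3
  have hdiv := (hasDerivAt_NN_s W a b c t s).div hden (pow_ne_zero 3 hr)
  have heq : (fun s' : ℝ => GG W a b c t s')
      = fun y => NN W a b c t y / (Real.sqrt (QQ W a b c t y))^3 := by
    funext y; simp only [GG]
  rw [heq]
  refine hdiv.congr_deriv ?_
  set r := Real.sqrt (QQ W a b c t s) with hrdef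
  have hr2 : r^2 = QQ W a b c t s := Real.sq_sqrt h.le
  simp only [Pi.pow_apply]
  rw [← hr2]
  rw [Real.sqrt_sq (Real.sqrt_nonneg _ : (0:ℝ) ≤ r)]
  field_simp
  ring

private lemma contQQ_t (W a b c s : ℝ) : Continuous (fun t : ℝ => QQ W a b c t s) := by
  simp only [QQ]; fun_prop

private lemma contQQ_s (W a b c t : ℝ) : Continuous (fun s : ℝ => QQ W a b c t s) := by
  simp only [QQ]; fun_prop

private lemma dd_eq (W a b c t s : ℝ) (h : 0 < QQ W a b c t s) :
    deriv (fun s' : ℝ => deriv (fun t' : ℝ => Real.sqrt (QQ W a b c t' s')) t) s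
      = GG W a b c t s := by
  have hev : ∀ᶠ s' in nhds s, 0 < QQ W a b c t s' :=
    (contQQ_s W a b c t).continuousAt.eventually (eventually_gt_nhds h)
  have hev2 : (fun s' => deriv (fun t' => Real.sqrt (QQ W a b c t' s')) t)
      =ᶠ[nhds s] (fun s' => FF W a b c t s') := by
    filter_upwards [hev] with s' hs'
    exact (hasDerivAt_sqrtQQ_t W a b c s' t hs').deriv
  rw [hev2.deriv_eq, (hasDerivAt_FF_s W a b c t s h).deriv]

private lemma ddd_t (W a b c t s : ℝ) (h : 0 < QQ W a b c t s) :
    deriv (fun t' : ℝ => deriv (fun s' : ℝ =>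
        deriv (fun t'' : ℝ => Real.sqrt (QQ W a b c t'' s')) t') s) t
      = ((BB b c t s - c * AA a c t s) * QQ W a b c t s - 3 * NN W a b c t s * AA a c t s)
        * Real.sqrt (QQ W a b c t s) / (QQ W a b c t s)^3 := by
  have hev : ∀ᶠ t' in nhds t, 0 < QQ W a b c t' s :=
    (contQQ_t W a b c s).continuousAt.eventually (eventually_gt_nhds h)
  have hev2 : (fun t' => deriv (fun s' =>
        deriv (fun t'' : ℝ => Real.sqrt (QQ W a b c t'' s')) t') s)
      =ᶠ[nhds t] (fun t' => GG W a b c t' s) := by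
    filter_upwards [hev] with t' ht'
    exact dd_eq W a b c t' s ht'
  rw [hev2.deriv_eq, (hasDerivAt_GG_t W a b c s t h).deriv]

private lemma ddd_s (W a b c t s : ℝ) (h : 0 < QQ W a b c t s) :
    deriv (fun s' : ℝ => deriv (fun s'' : ℝ =>
        deriv (fun t' : ℝ => Real.sqrt (QQ W a b c t' s'')) t) s') s
      = ((c * BB b c t s - AA a c t s) * QQ W a b c t s + 3 * NN W a b c t s * BB b c t s)
        * Real.sqrt (QQ W a b c t s) / (QQ W a b c t s)^3 := by
  have hev : ∀ᶠ s' in nhds s, 0 < QQ W a b c t s' :=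
    (contQQ_s W a b c t).continuousAt.eventually (eventually_gt_nhds h)
  have hev2 : (fun s' => deriv (fun s'' : ℝ =>
        deriv (fun t' : ℝ => Real.sqrt (QQ W a b c t' s'')) t) s')
      =ᶠ[nhds s] (fun s' => GG W a b c t s') := by
    filter_upwards [hev] with s' hs'
    exact dd_eq W a b c t s' hs'
  rw [hev2.deriv_eq, (hasDerivAt_GG_s W a b c t s h).deriv]

/-- Zero-curvature case of Lemma 4.1: for two distinct unit-speed lines
`γᵢ(t) = pᵢ + t vᵢ` in Euclidean `ℝ³` and `φ(t,s) = |γ₁(t) - γ₂(s)|`, there is at most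
one point `(t₀,s₀)` off of which (where `φ ≠ 0`) at least one of `φ''_{ts}`,
`φ'''_{tts}`, `φ'''_{tss}` is nonzero. -/
theorem stmt_12 (p₁ p₂ v₁ v₂ : EuclideanSpace ℝ (Fin 3))
    (hv₁ : ‖v₁‖ = 1) (hv₂ : ‖v₂‖ = 1)
    (hdist : Set.range (fun t : ℝ => p₁ + t • v₁) ≠
      Set.range (fun s : ℝ => p₂ + s • v₂)) :
    ∃ t₀ s₀ : ℝ, ∀ t s : ℝ,
      ‖(p₁ + t • v₁) - (p₂ + s • v₂)‖ ≠ 0 → (t, s) ≠ (t₀, s₀) →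
      (deriv (fun s' : ℝ =>
          deriv (fun t' : ℝ => ‖(p₁ + t' • v₁) - (p₂ + s' • v₂)‖) t) s ≠ 0 ∨
        deriv (fun t' : ℝ =>
          deriv (fun s' : ℝ =>
            deriv (fun t'' : ℝ => ‖(p₁ + t'' • v₁) - (p₂ + s' • v₂)‖) t') s) t ≠ 0 ∨
        deriv (fun s' : ℝ =>
          deriv (fun s'' : ℝ =>
            deriv (fun t' : ℝ => ‖(p₁ + t' • v₁) - (p₂ + s'' • v₂)‖) t) s') s ≠ 0) := by
  set a : ℝ := inner ℝ (p₁ - p₂) v₁ with ha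
  set b : ℝ := inner ℝ (p₁ - p₂) v₂ with hb
  set c : ℝ := inner ℝ v₁ v₂ with hc
  set W : ℝ := ‖p₁ - p₂‖^2 with hW
  have e2 : (inner ℝ v₁ v₁ : ℝ) = 1 := by rw [real_inner_self_eq_norm_sq, hv₁]; norm_num
  have e3 : (inner ℝ v₂ v₂ : ℝ) = 1 := by rw [real_inner_self_eq_norm_sq, hv₂]; norm_num
  have hQval : ∀ t s : ℝ, QQ W a b c t s = ‖(p₁ + t • v₁) - (p₂ + s • v₂)‖^2 := by
    intro t s
    have hy : (p₁ + t • v₁) - (p₂ + s • v₂) = (p₁ - p₂) + (t • v₁ - s • v₂) := by abel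
    rw [ha, hb, hc, hW, hy]
    obtain ⟨w, hw⟩ : ∃ w, p₁ - p₂ = w := ⟨_, rfl⟩
    rw [hw]
    conv_rhs => rw [← real_inner_self_eq_norm_sq]
    simp only [inner_add_left, inner_add_right, inner_sub_left, inner_sub_right,
      real_inner_smul_left, real_inner_smul_right, e2, e3,
      real_inner_comm v₁ w, real_inner_comm v₂ w, real_inner_comm v₂ v₁, QQ]
    rw [real_inner_self_eq_norm_sq w]
    ring
  have hkey : ∀ t s : ℝ, ‖(p₁ + t • v₁) - (p₂ + s • v₂)‖ = Real.sqrt (QQ W a b c t s) := by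
    intro t s
    rw [hQval t s, Real.sqrt_sq (norm_nonneg _)]
  simp only [hkey]
  have hQpos : ∀ t s : ℝ, Real.sqrt (QQ W a b c t s) ≠ 0 → 0 < QQ W a b c t s :=
    fun t s h => Real.sqrt_ne_zero'.mp h
  by_cases hc2 : c^2 = 1
  · -- parallel lines
    have hcne : c ≠ 0 := by intro h; rw [h] at hc2; norm_num at hc2
    have e6 : (inner ℝ v₂ v₁ : ℝ) = c := by rw [real_inner_comm]
    have hv2 : v₂ = c • v₁ := by
      have h0 : ‖v₂ - c • v₁‖^2 = 0 := by
        rw [norm_sub_sq_real, norm_smul, real_inner_smul_right, e6, hv₂, hv₁, Real.norm_eq_abs]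
        nlinarith [sq_abs c, hc2]
      have h1 : ‖v₂ - c • v₁‖ = 0 := (pow_eq_zero_iff (by norm_num : (2:ℕ) ≠ 0)).mp h0
      exact sub_eq_zero.mp (norm_eq_zero.mp h1)
    have hba : b = c * a := by rw [hb, hv2, real_inner_smul_right, ← ha]
    have haW : a^2 ≠ W := by
      intro haW
      apply hdist
      have hwv : p₁ - p₂ = a • v₁ := by
        have h0 : ‖(p₁ - p₂) - a • v₁‖^2 = 0 := by
          rw [norm_sub_sq_real, norm_smul, real_inner_smul_right, ← ha, hv₁,
            Real.norm_eq_abs, ← hW]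
          nlinarith [sq_abs a, haW]
        have h1 : ‖(p₁ - p₂) - a • v₁‖ = 0 := (pow_eq_zero_iff (by norm_num : (2:ℕ) ≠ 0)).mp h0
        exact sub_eq_zero.mp (norm_eq_zero.mp h1)
      have hp1 : p₁ = a • v₁ + p₂ := sub_eq_iff_eq_add.mp hwv
      ext x
      simp only [Set.mem_range]
      constructor
      · rintro ⟨t, rfl⟩
        refine ⟨c*(a+t), ?_⟩
        rw [hv2, smul_smul, show c*(a+t)*c = a+t by linear_combination (a+t)*hc2,
          hp1, add_smul]
        abel
      · rintro ⟨s, rfl⟩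
        refine ⟨s*c - a, ?_⟩
        rw [hv2, smul_smul, hp1, sub_smul]
        abel
    refine ⟨0, 0, ?_⟩
    intro t s hφ _
    left
    have hQ := hQpos t s hφ
    rw [dd_eq W a b c t s hQ]
    have hNN : NN W a b c t s = c * (a^2 - W) := by
      simp only [NN, AA, BB, QQ, hba]
      linear_combination (t*s + a*s) * hc2
    rw [GG, hNN]
    exact div_ne_zero (mul_ne_zero hcne (sub_ne_zero.mpr haW))
      (pow_ne_zero 3 (ne_of_gt (Real.sqrt_pos.mpr hQ)))
  · -- non-parallel case
    refine ⟨(b - a*c)/(1 - c^2)*c - a, (b - a*c)/(1 - c^2), ?_⟩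
    intro t s hφ hne
    by_contra hcon
    push_neg at hcon
    obtain ⟨h1, h2, h3⟩ := hcon
    have hQ := hQpos t s hφ
    have hr : Real.sqrt (QQ W a b c t s) ≠ 0 := ne_of_gt (Real.sqrt_pos.mpr hQ)
    have hQne : QQ W a b c t s ≠ 0 := ne_of_gt hQ
    rw [dd_eq W a b c t s hQ] at h1
    rw [ddd_t W a b c t s hQ] at h2
    rw [ddd_s W a b c t s hQ] at h3
    have hN : NN W a b c t s = 0 := by
      have h1' : NN W a b c t s / (Real.sqrt (QQ W a b c t s))^3 = 0 := by rw [← GG]; exact h1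
      exact (div_eq_zero_iff.mp h1').resolve_right (pow_ne_zero 3 hr)
    have hBA : BB b c t s - c * AA a c t s = 0 := by
      have h2' := (div_eq_zero_iff.mp h2).resolve_right (pow_ne_zero 3 hQne)
      have h2'' := (mul_eq_zero.mp h2').resolve_right hr
      rw [hN] at h2''
      have hmul : (BB b c t s - c * AA a c t s) * QQ W a b c t s = 0 := by
        linear_combination h2''
      exact (mul_eq_zero.mp hmul).resolve_right hQne
    have hAB : c * BB b c t s - AA a c t s = 0 := by
      have h3' := (div_eq_zero_iff.mp h3).resolve_right (pow_ne_zero 3 hQne)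
      have h3'' := (mul_eq_zero.mp h3').resolve_right hr
      rw [hN] at h3''
      have hmul : (c * BB b c t s - AA a c t s) * QQ W a b c t s = 0 := by
        linear_combination h3''
      exact (mul_eq_zero.mp hmul).resolve_right hQne
    have h1c : (1 : ℝ) - c^2 ≠ 0 := by intro h; apply hc2; linarith
    have hA : AA a c t s = 0 := by
      have hmul : AA a c t s * (1 - c^2) = 0 := by linear_combination c*hBA - hAB
      exact (mul_eq_zero.mp hmul).resolve_right h1c
    have hB : BB b c t s = 0 := by linear_combination hBA + c*hA
    simp only [AA] at hA
    simp only [BB] at hB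
    apply hne
    have hs : s = (b - a*c)/(1 - c^2) := by
      field_simp
      linear_combination c*hA - hB
    have ht : t = (b - a*c)/(1 - c^2)*c - a := by
      rw [← hs]
      linarith
    rw [ht, hs]
end
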